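/- arXiv:2203.04381 — 2 statements merged into one kernel-verified Lean document; each statement's English description precedes it below -/
import Mathlib

section
/- Let L : [0,∞) → ℝ be defined by L(t) = r(t)ᵀ(N̄₂(t) − κ_d sgn(ζ(t))) + ζ̇(t)ᵀÑ₁(t) + c·ζ(t)ᵀ sgn(ζ(t)), where r = ζ̇ + k₂ζ. Suppose ‖N̄₂(t)‖ ≤ ε_M + d_M, ‖dN̄₂/dt(t)‖ ≤ d_{dM} + ε_{dM}, ‖Ñ₁(t)‖ ≤ N_M, ‖dÑ₁/dt(t)‖ ≤ N_{dM}, and κ_d = d_M + ε_M + (1/k₂)·max{d_{dM} + ε_{dM} + N_{dM} + c, k₂N_M}. Then for all t ≥ 0, ∫₀ᵗ L(s) ds ≤ κ_d‖ζ(0)‖₁ − ζ(0)ᵀ(N̄₂(0) + Ñ₁(0)), i.e., the quantity M(t) = κ_d‖ζ(0)‖₁ − ζ(0)ᵀ(N̄₂(0) + Ñ₁(0)) − ∫₀ᵗ L(s) ds is nonnegative. -/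
open MeasureTheory intervalIntegral


private lemma mul_sign_eq_abs (x : ℝ) : x * Real.sign x = |x| := by
  rcases lt_trichotomy x 0 with h|h|h
  · rw [Real.sign_of_neg h, abs_of_neg h]; ring
  · simp [h]
  · rw [Real.sign_of_pos h, abs_of_pos h]; ring

private lemma abs_coord_le {n : ℕ} (x : EuclideanSpace ℝ (Fin n)) (i : Fin n) :
    |x i| ≤ ‖x‖ := by
  have h1 : ‖x i‖ ^ 2 ≤ ∑ j, ‖x j‖ ^ 2 :=
    Finset.single_le_sum (fun j _ => sq_nonneg ‖x j‖) (Finset.mem_univ i)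
  calc |x i| = Real.sqrt (‖x i‖ ^ 2) := by
        rw [Real.sqrt_sq (norm_nonneg _)]; exact (Real.norm_eq_abs _).symm
    _ ≤ Real.sqrt (∑ j, ‖x j‖ ^ 2) := Real.sqrt_le_sqrt h1
    _ = ‖x‖ := (EuclideanSpace.norm_eq x).symm

private lemma abs_sum_mul_le {n : ℕ} (f h : Fin n → ℝ) (C : ℝ)
    (hC : ∀ i, |h i| ≤ C) : |∑ i, f i * h i| ≤ C * ∑ i, |f i| := by
  rw [Finset.mul_sum]
  refine (Finset.abs_sum_le_sum_abs _ _).trans (Finset.sum_le_sum fun i _ => ?_)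
  rw [abs_mul, mul_comm]
  exact mul_le_mul_of_nonneg_right (hC i) (abs_nonneg _)

private lemma sum_mul_le {n : ℕ} (f h : Fin n → ℝ) (C : ℝ)
    (hC : ∀ i, |h i| ≤ C) : ∑ i, f i * h i ≤ C * ∑ i, |f i| :=
  (le_abs_self _).trans (abs_sum_mul_le f h C hC)

private lemma hasDerivWithinAt_abs_right {f : ℝ → ℝ} {f' s : ℝ} (hf : HasDerivAt f f' s) :
    HasDerivWithinAt (fun u => |f u|)
      (if f s = 0 then |f'| else Real.sign (f s) * f') (Set.Ioi s) s := by
  rcases lt_trichotomy (f s) 0 with h|h|h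
  · rw [if_neg h.ne, Real.sign_of_neg h]
    have hev : (fun u => |f u|) =ᶠ[nhds s] (fun u => -f u) := by
      filter_upwards [hf.continuousAt.preimage_mem_nhds (Iio_mem_nhds h)] with u hu
      exact abs_of_neg hu
    have : HasDerivAt (fun u => |f u|) (-f') s := hf.neg.congr_of_eventuallyEq hev
    simpa [neg_mul] using this.hasDerivWithinAt
  · rw [if_pos h]
    rw [hasDerivWithinAt_iff_tendsto_slope]
    have h1 : Filter.Tendsto (slope f s) (nhdsWithin s (Set.Ioi s \ {s})) (nhds f') :=
      hasDerivWithinAt_iff_tendsto_slope.mp hf.hasDerivWithinAt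
    have h2 : Filter.Tendsto (fun y => |slope f s y|) (nhdsWithin s (Set.Ioi s \ {s}))
        (nhds |f'|) := (continuous_abs.tendsto f').comp h1
    refine h2.congr' ?_
    filter_upwards [self_mem_nhdsWithin] with y hy
    have hy' : (0:ℝ) < y - s := sub_pos.mpr hy.1
    rw [slope_def_field, slope_def_field, h, abs_zero, sub_zero, sub_zero, abs_div, abs_of_pos hy']
  · rw [if_neg h.ne', Real.sign_of_pos h]
    have hev : (fun u => |f u|) =ᶠ[nhds s] f := by
      filter_upwards [hf.continuousAt.preimage_mem_nhds (Ioi_mem_nhds h)] with u hu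
      exact abs_of_pos hu
    have : HasDerivAt (fun u => |f u|) f' s := hf.congr_of_eventuallyEq hev
    simpa [one_mul] using this.hasDerivWithinAt

private lemma countable_bad {f fd : ℝ → ℝ} (hf : ∀ x, HasDerivAt f (fd x) x) :
    Set.Countable {x | f x = 0 ∧ fd x ≠ 0} := by
  set S := {x | f x = 0 ∧ fd x ≠ 0} with hS
  have hdisc : DiscreteTopology S := by
    rw [discreteTopology_subtype_iff]
    intro x hx
    rw [Filter.inf_principal_eq_bot]
    filter_upwards [(hf x).eventually_ne hx.2] with z hz
    intro hzS
    exact hz (hzS.1.trans hx.1.symm)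
  have : Countable S := TopologicalSpace.separableSpace_iff_countable.mp inferInstance
  exact Set.countable_coe_iff.mp this

/-- Lemma 5 of the paper: with `L(t) = r(t)ᵀ(N̄₂(t) − κ_d sgn ζ(t)) + ζ̇(t)ᵀÑ₁(t)
+ c ζ(t)ᵀ sgn ζ(t)`, `r = ζ̇ + k₂ ζ`, under the stated bounds on `N̄₂, Ñ₁` and
their derivatives, and with the gain
`κ_d = d_M + ε_M + (1/k₂) max{d_{dM}+ε_{dM}+N_{dM}+c, k₂ N_M}`, the quantity
`M(t) = κ_d‖ζ(0)‖₁ − ζ(0)ᵀ(N̄₂(0)+Ñ₁(0)) − ∫₀ᵗ L(s) ds` is nonnegative. -/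
theorem stmt_10 {n : ℕ} (k₂ c : ℝ) (hk₂ : 0 < k₂) (hc : 0 ≤ c)
    (ζ ζd N2 N2d N1 N1d : ℝ → EuclideanSpace ℝ (Fin n))
    (hζ : ∀ t, HasDerivAt ζ (ζd t) t)
    (hN2 : ∀ t, HasDerivAt N2 (N2d t) t)
    (hN1 : ∀ t, HasDerivAt N1 (N1d t) t)
    (εM dM ddM εdM NM NdM : ℝ)
    (hbN2 : ∀ t, ‖N2 t‖ ≤ εM + dM)
    (hbN2d : ∀ t, ‖N2d t‖ ≤ ddM + εdM)
    (hbN1 : ∀ t, ‖N1 t‖ ≤ NM)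
    (hbN1d : ∀ t, ‖N1d t‖ ≤ NdM)
    (κd : ℝ)
    (hκd : κd = dM + εM + (1 / k₂) * max (ddM + εdM + NdM + c) (k₂ * NM))
    (L : ℝ → ℝ)
    (hL : ∀ t, L t =
      (∑ i, (ζd t i + k₂ * ζ t i) * (N2 t i - κd * Real.sign (ζ t i))) +
      (∑ i, ζd t i * N1 t i) +
      c * ∑ i, ζ t i * Real.sign (ζ t i)) :
    ∀ t : ℝ, 0 ≤ t →
      0 ≤ κd * (∑ i, |ζ 0 i|) - (∑ i, ζ 0 i * (N2 0 i + N1 0 i))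
          - ∫ s in (0:ℝ)..t, L s := by
  have hζi : ∀ s i, HasDerivAt (fun u => ζ u i) (ζd s i) s := fun s i =>
    (EuclideanSpace.proj (𝕜 := ℝ) i).hasFDerivAt.comp_hasDerivAt s (hζ s)
  have hN2i : ∀ s i, HasDerivAt (fun u => N2 u i) (N2d s i) s := fun s i =>
    (EuclideanSpace.proj (𝕜 := ℝ) i).hasFDerivAt.comp_hasDerivAt s (hN2 s)
  have hN1i : ∀ s i, HasDerivAt (fun u => N1 u i) (N1d s i) s := fun s i =>
    (EuclideanSpace.proj (𝕜 := ℝ) i).hasFDerivAt.comp_hasDerivAt s (hN1 s)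
  have contζ : ∀ i, Continuous fun s => ζ s i := fun i =>
    continuous_iff_continuousAt.2 fun s => (hζi s i).continuousAt
  have contN2 : ∀ i, Continuous fun s => N2 s i := fun i =>
    continuous_iff_continuousAt.2 fun s => (hN2i s i).continuousAt
  have contN1 : ∀ i, Continuous fun s => N1 s i := fun i =>
    continuous_iff_continuousAt.2 fun s => (hN1i s i).continuousAt
  -- nonnegativity of the constants
  have hεM : 0 ≤ εM + dM := (norm_nonneg _).trans (hbN2 0)
  have hNM : 0 ≤ NM := (norm_nonneg _).trans (hbN1 0)
  have hddM : 0 ≤ ddM + εdM := (norm_nonneg _).trans (hbN2d 0)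
  have hNdM : 0 ≤ NdM := (norm_nonneg _).trans (hbN1d 0)
  have hmaxNM : NM ≤ (1 / k₂) * max (ddM + εdM + NdM + c) (k₂ * NM) := by
    have h1 : (1 / k₂) * (k₂ * NM) ≤ (1 / k₂) * max (ddM + εdM + NdM + c) (k₂ * NM) :=
      mul_le_mul_of_nonneg_left (le_max_right _ _) (by positivity)
    have h2 : (1 / k₂) * (k₂ * NM) = NM := by field_simp
    linarith
  have hκd1 : εM + dM + NM ≤ κd := by rw [hκd]; linarith
  have hκd0 : 0 ≤ κd := by linarith
  have hκd2 : k₂ * (εM + dM) + c + ((ddM + εdM) + NdM) ≤ k₂ * κd := by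
    have h1 : k₂ * κd = k₂ * (dM + εM) + max (ddM + εdM + NdM + c) (k₂ * NM) := by
      rw [hκd]; field_simp
    have h2 := le_max_left (ddM + εdM + NdM + c) (k₂ * NM)
    linarith
  have hS0 : ∀ s, (0:ℝ) ≤ ∑ i, |ζ s i| := fun s => Finset.sum_nonneg fun i _ => abs_nonneg _
  have key_bd : ∀ s, ∑ i, ζ s i * (N2 s i + N1 s i) ≤ (εM + dM + NM) * ∑ i, |ζ s i| := by
    intro s
    refine sum_mul_le _ _ _ fun i => ?_
    calc |N2 s i + N1 s i| ≤ |N2 s i| + |N1 s i| := abs_add_le _ _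
      _ ≤ ‖N2 s‖ + ‖N1 s‖ := add_le_add (abs_coord_le _ i) (abs_coord_le _ i)
      _ ≤ (εM + dM) + NM := add_le_add (hbN2 s) (hbN1 s)
  have hA : 0 ≤ κd * (∑ i, |ζ 0 i|) - (∑ i, ζ 0 i * (N2 0 i + N1 0 i)) := by
    have h1 := key_bd 0
    have h2 : (εM + dM + NM) * (∑ i, |ζ 0 i|) ≤ κd * (∑ i, |ζ 0 i|) :=
      mul_le_mul_of_nonneg_right hκd1 (hS0 0)
    linarith
  intro t ht
  by_cases hInt : IntervalIntegrable L volume 0 t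
  swap
  · rw [intervalIntegral.integral_undef hInt]; linarith
  -- definitions
  set q : ℝ → ℝ := fun s => ∑ i, ζ s i * (N2d s i + N1d s i) with hq
  set G : ℝ → ℝ := fun s =>
    k₂ * (∑ i, ζ s i * N2 s i) + (c - k₂ * κd) * (∑ i, |ζ s i|) - q s with hG
  set p : ℝ → ℝ := fun s =>
    (∑ i, (ζd s i * (N2 s i + N1 s i) + ζ s i * (N2d s i + N1d s i)))
      - κd * ∑ i, ζd s i * Real.sign (ζ s i) with hp
  set H : ℝ → ℝ := fun s =>
    (∑ i, ζ s i * (N2 s i + N1 s i)) - κd * ∑ i, |ζ s i| with hH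
  set Hd : ℝ → ℝ := fun s =>
    (∑ i, (ζd s i * (N2 s i + N1 s i) + ζ s i * (N2d s i + N1d s i)))
      - κd * ∑ i, (if ζ s i = 0 then |ζd s i| else Real.sign (ζ s i) * ζd s i) with hHd
  -- bound on q
  have hqb : ∀ s, |q s| ≤ ((ddM + εdM) + NdM) * ∑ i, |ζ s i| := by
    intro s
    simp only [hq]
    refine abs_sum_mul_le _ _ _ fun i => ?_
    calc |N2d s i + N1d s i| ≤ |N2d s i| + |N1d s i| := abs_add_le _ _
      _ ≤ ‖N2d s‖ + ‖N1d s‖ := add_le_add (abs_coord_le _ i) (abs_coord_le _ i)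
      _ ≤ (ddM + εdM) + NdM := add_le_add (hbN2d s) (hbN1d s)
  -- continuity
  have contS : Continuous fun s => ∑ i, |ζ s i| :=
    continuous_finset_sum _ fun i _ => (contζ i).abs
  have contT : Continuous fun s => ∑ i, ζ s i * N2 s i :=
    continuous_finset_sum _ fun i _ => (contζ i).mul (contN2 i)
  have contV : Continuous fun s => ∑ i, ζ s i * (N2 s i + N1 s i) :=
    continuous_finset_sum _ fun i _ => (contζ i).mul ((contN2 i).add (contN1 i))
  have Hcont : Continuous H := by
    rw [hH]; exact contV.sub (continuous_const.mul contS)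
  -- measurability and integrability of q
  have hN2dm : Measurable N2d := by
    have h : N2d = deriv N2 := funext fun s => ((hN2 s).deriv).symm
    rw [h]; exact measurable_deriv _
  have hN1dm : Measurable N1d := by
    have h : N1d = deriv N1 := funext fun s => ((hN1 s).deriv).symm
    rw [h]; exact measurable_deriv _
  have hqm : Measurable q := by
    rw [hq]
    refine Finset.measurable_sum _ fun i _ => ((contζ i).measurable.mul ?_)
    exact ((EuclideanSpace.proj (𝕜 := ℝ) i).continuous.measurable.comp hN2dm).add
      ((EuclideanSpace.proj (𝕜 := ℝ) i).continuous.measurable.comp hN1dm)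
  have hq_int : IntervalIntegrable q volume 0 t := by
    have hbint : IntervalIntegrable (fun s => ((ddM + εdM) + NdM) * ∑ i, |ζ s i|)
        volume 0 t := (continuous_const.mul contS).intervalIntegrable 0 t
    refine hbint.mono_fun hqm.aestronglyMeasurable (Filter.Eventually.of_forall fun s => ?_)
    simp only [Real.norm_eq_abs]
    exact (hqb s).trans (le_abs_self _)
  have hG_int : IntervalIntegrable G volume 0 t := by
    have h1 : IntervalIntegrable (fun s =>
        k₂ * (∑ i, ζ s i * N2 s i) + (c - k₂ * κd) * (∑ i, |ζ s i|)) volume 0 t :=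
      ((continuous_const.mul contT).add (continuous_const.mul contS)).intervalIntegrable 0 t
    exact h1.sub hq_int
  -- algebraic identity
  have hLpG : ∀ s, L s - G s = p s := by
    intro s
    rw [hL s]
    simp only [hG, hq, hp]
    have habs : (∑ i, |ζ s i|) = ∑ i, ζ s i * Real.sign (ζ s i) :=
      Finset.sum_congr rfl fun i _ => (mul_sign_eq_abs _).symm
    rw [habs]
    simp only [Finset.mul_sum, ← Finset.sum_add_distrib, ← Finset.sum_sub_distrib]
    exact Finset.sum_congr rfl fun i _ => by ring
  have hp_int : IntervalIntegrable p volume 0 t := by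
    have h1 := hInt.sub hG_int
    have h2 : (fun s => L s - G s) = p := funext hLpG
    rwa [h2] at h1
  -- Hd = p almost everywhere
  have hae : ∀ᵐ x : ℝ, Hd x = p x := by
    have hN0 : (volume : Measure ℝ) (⋃ i, {x | ζ x i = 0 ∧ ζd x i ≠ 0}) = 0 :=
      measure_iUnion_null fun i =>
        (countable_bad (fun x => hζi x i)).measure_zero _
    have h0 : ∀ᵐ x : ℝ, x ∉ ⋃ i, {x | ζ x i = 0 ∧ ζd x i ≠ 0} :=
      MeasureTheory.measure_eq_zero_iff_ae_notMem.mp hN0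
    filter_upwards [h0] with x hx
    simp only [hHd, hp]
    have hterm : ∀ i : Fin n,
        (if ζ x i = 0 then |ζd x i| else Real.sign (ζ x i) * ζd x i)
          = ζd x i * Real.sign (ζ x i) := by
      intro i
      by_cases h : ζ x i = 0
      · have hzd : ζd x i = 0 := by
          by_contra hne
          exact hx (Set.mem_iUnion.2 ⟨i, ⟨h, hne⟩⟩)
        simp [h, hzd]
      · rw [if_neg h, mul_comm]
    rw [Finset.sum_congr rfl fun i _ => hterm i]
  -- right derivative of H
  have Hderiv : ∀ x ∈ Set.Ioo (0:ℝ) t, HasDerivWithinAt H (Hd x) (Set.Ioi x) x := by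
    intro x _
    have h1 : HasDerivAt (fun u => ∑ i, ζ u i * (N2 u i + N1 u i))
        (∑ i, (ζd x i * (N2 x i + N1 x i) + ζ x i * (N2d x i + N1d x i))) x :=
      HasDerivAt.fun_sum fun i _ => (hζi x i).mul ((hN2i x i).add (hN1i x i))
    have h2 : HasDerivWithinAt (fun u => ∑ i, |ζ u i|)
        (∑ i, (if ζ x i = 0 then |ζd x i| else Real.sign (ζ x i) * ζd x i))
        (Set.Ioi x) x :=
      HasDerivWithinAt.fun_sum fun i _ => hasDerivWithinAt_abs_right (hζi x i)
    have h3 := h1.hasDerivWithinAt.fun_sub (h2.const_mul κd)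
    simpa only [hH, hHd] using h3
  have HdIntOn : IntegrableOn Hd (Set.Icc 0 t) := by
    have hpOn : IntegrableOn p (Set.Icc 0 t) :=
      (intervalIntegrable_iff_integrableOn_Icc_of_le ht).mp hp_int
    exact hpOn.congr (ae_restrict_of_ae (hae.mono fun x h => h.symm))
  have hkey : (∫ y in (0:ℝ)..t, Hd y) ≤ H t - H 0 :=
    intervalIntegral.integral_le_sub_of_hasDeriv_right_of_le ht Hcont.continuousOn Hderiv
      HdIntOn (fun x _ => le_rfl)
  have hHdp : (∫ y in (0:ℝ)..t, Hd y) = ∫ y in (0:ℝ)..t, p y :=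
    intervalIntegral.integral_congr_ae (hae.mono fun x hx _ => hx)
  have hsplit : (∫ s in (0:ℝ)..t, p s)
      = (∫ s in (0:ℝ)..t, L s) - ∫ s in (0:ℝ)..t, G s := by
    rw [← intervalIntegral.integral_sub hInt hG_int]
    exact intervalIntegral.integral_congr fun x _ => (hLpG x).symm
  have hGle : ∀ s, G s ≤ 0 := by
    intro s
    have hT : (∑ i, ζ s i * N2 s i) ≤ (εM + dM) * ∑ i, |ζ s i| :=
      sum_mul_le _ _ _ fun i => (abs_coord_le _ i).trans (hbN2 s)
    have hq' : -q s ≤ ((ddM + εdM) + NdM) * ∑ i, |ζ s i| := (neg_le_abs _).trans (hqb s)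
    have hbr : 0 ≤ (k₂ * κd - (k₂ * (εM + dM) + c + ((ddM + εdM) + NdM))) * ∑ i, |ζ s i| :=
      mul_nonneg (by linarith) (hS0 s)
    have h1 : k₂ * (∑ i, ζ s i * N2 s i) ≤ k₂ * ((εM + dM) * ∑ i, |ζ s i|) :=
      mul_le_mul_of_nonneg_left hT hk₂.le
    simp only [hG]
    nlinarith [hS0 s]
  have hGint_le : (∫ s in (0:ℝ)..t, G s) ≤ 0 := by
    have h := intervalIntegral.integral_nonneg (μ := volume) (f := fun s => -G s) ht
      (fun u _ => neg_nonneg.2 (hGle u))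
    rw [intervalIntegral.integral_neg] at h
    linarith
  have hHt : H t ≤ 0 := by
    have h2 : (εM + dM + NM) * (∑ i, |ζ t i|) ≤ κd * (∑ i, |ζ t i|) :=
      mul_le_mul_of_nonneg_right hκd1 (hS0 t)
    have h1 := key_bd t
    simp only [hH]
    linarith
  have hH0 : H 0 = (∑ i, ζ 0 i * (N2 0 i + N1 0 i)) - κd * (∑ i, |ζ 0 i|) := by
    simp only [hH]
  linarith [hkey, hHdp, hsplit, hGint_le, hHt, hH0]
end

section
/- Barbalat's lemma: if f : [0,∞) → ℝ is uniformly continuous and the limit of ∫₀ᵗ f(s) ds as t → ∞ exists and is finite, then f(t) → 0 as t → ∞. -/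
open MeasureTheory Filter

/-- Barbalat's lemma: if `f : [0,∞) → ℝ` is uniformly continuous and
`∫₀ᵗ f(s) ds` converges to a finite limit as `t → ∞`, then `f(t) → 0`. -/
theorem stmt_13 (f : ℝ → ℝ)
    (huc : UniformContinuousOn f (Set.Ici 0))
    (l : ℝ)
    (hconv : Tendsto (fun t => ∫ s in (0:ℝ)..t, f s) atTop (nhds l)) :
    Tendsto f atTop (nhds 0) := by
  have hcont : ContinuousOn f (Set.Ici 0) := huc.continuousOn
  have hint : ∀ a b : ℝ, 0 ≤ a → a ≤ b → IntervalIntegrable f volume a b := by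
    intro a b ha hab
    apply ContinuousOn.intervalIntegrable
    apply hcont.mono
    rw [Set.uIcc_of_le hab]
    exact fun x hx => le_trans ha hx.1
  rw [Metric.tendsto_atTop]
  by_contra hf
  push_neg at hf
  obtain ⟨ε, hε, hseq⟩ := hf
  rw [Metric.uniformContinuousOn_iff] at huc
  obtain ⟨δ, hδ, hucδ⟩ := huc (ε/2) (by linarith)
  set h := δ/2 with hh
  have hh0 : 0 < h := by positivity
  rw [Metric.tendsto_atTop] at hconv
  obtain ⟨T, hT⟩ := hconv (ε*h/8) (by positivity)
  obtain ⟨t, ht, hft⟩ := hseq (max T 0)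
  have ht0 : (0:ℝ) ≤ t := le_trans (le_max_right T 0) ht
  have htT : T ≤ t := le_trans (le_max_left T 0) ht
  have hft' : ε ≤ |f t| := by simpa [Real.dist_eq] using hft
  have hI1 : IntervalIntegrable f volume 0 t := hint 0 t le_rfl ht0
  have hI2 : IntervalIntegrable f volume t (t+h) := hint t (t+h) ht0 (by linarith)
  have hadd := intervalIntegral.integral_add_adjacent_intervals hI1 hI2
  have hbound : |∫ s in t..(t+h), (f s - f t)| ≤ (ε/2) * h := by
    have hb := intervalIntegral.norm_integral_le_of_norm_le_const (a := t) (b := t+h)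
      (C := ε/2) (f := fun s => f s - f t) ?_
    · have : |t + h - t| = h := by rw [abs_of_pos (by linarith)]; ring
      rw [Real.norm_eq_abs, this] at hb
      exact hb
    · intro x hx
      rw [Set.uIoc_of_le (by linarith : t ≤ t + h)] at hx
      have hx0 : x ∈ Set.Ici (0:ℝ) := le_trans ht0 (le_of_lt hx.1)
      have hd : dist x t < δ := by
        rw [Real.dist_eq, abs_of_nonneg (by linarith [hx.1.le])]
        linarith [hx.2]
      have := hucδ x hx0 t (Set.mem_Ici.mpr ht0) hd
      rw [Real.norm_eq_abs]
      exact le_of_lt (by simpa [Real.dist_eq] using this)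
  have hsplit : (∫ s in t..(t+h), f s) = (∫ s in t..(t+h), (f s - f t)) + h * f t := by
    rw [intervalIntegral.integral_sub hI2 intervalIntegrable_const,
        intervalIntegral.integral_const]
    simp
  have hlow : ε * h / 2 ≤ |∫ s in t..(t+h), f s| := by
    rw [hsplit]
    set x := ∫ s in t..(t+h), (f s - f t) with hx
    have h1 : |h * f t| = h * |f t| := by rw [abs_mul, abs_of_pos hh0]
    have h2 : |h * f t| ≤ |x + h * f t| + |x| := by
      have := abs_add_le (x + h * f t) (-x)
      simpa using this
    have h3 : h * ε ≤ h * |f t| := by nlinarith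
    linarith [hbound]
  have hup : |∫ s in t..(t+h), f s| < ε * h / 4 := by
    have e1 : dist (∫ s in (0:ℝ)..t, f s) l < ε*h/8 := hT t htT
    have e2 : dist (∫ s in (0:ℝ)..(t+h), f s) l < ε*h/8 := hT (t+h) (by linarith)
    rw [Real.dist_eq] at e1 e2
    have heq : (∫ s in t..(t+h), f s) = (∫ s in (0:ℝ)..(t+h), f s) - (∫ s in (0:ℝ)..t, f s) := by
      linarith [hadd]
    rw [heq]
    calc |(∫ s in (0:ℝ)..(t+h), f s) - (∫ s in (0:ℝ)..t, f s)|
        ≤ |(∫ s in (0:ℝ)..(t+h), f s) - l| + |(∫ s in (0:ℝ)..t, f s) - l| := by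
          have := abs_sub_le (∫ s in (0:ℝ)..(t+h), f s) l (∫ s in (0:ℝ)..t, f s)
          rwa [abs_sub_comm l] at this
      _ < ε*h/4 := by linarith
  nlinarith [hlow, hup]
end
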